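/- arXiv:2502.10199 — 2 statements merged into one kernel-verified Lean document; each statement's English description precedes it below -/
import Mathlib

section
/- If there is a fixed vector ν ∈ ℝᵐ such that the second derivative of f satisfies H(x)[w,w] = ‖w‖²ν for every x, w ∈ ℝⁿ, then the Hug iterates satisfy f(x_k) = f(x₀) exactly, for every k ≥ 0. -/
open Matrix MeasureTheory

noncomputable section

abbrev Evec (n : ℕ) : Type := EuclideanSpace ℝ (Fin n)

/-- Apply a matrix to a vector of Euclidean space. -/
def mvE {m n : ℕ} (A : Matrix (Fin m) (Fin n) ℝ) (v : Evec n) : Evec m :=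
  Matrix.toEuclideanLin A v

/-- Moore–Penrose pseudoinverse `Aᵀ(AAᵀ)⁻¹` of a full-rank wide matrix. -/
def pinv {m n : ℕ} (A : Matrix (Fin m) (Fin n) ℝ) : Matrix (Fin n) (Fin m) ℝ :=
  Aᵀ * (A * Aᵀ)⁻¹

/-- Orthogonal projection onto the normal space: `N = A⁺A`. -/
def Nproj {m n : ℕ} (A : Matrix (Fin m) (Fin n) ℝ) : Matrix (Fin n) (Fin n) ℝ :=
  pinv A * A

/-- Orthogonal projection onto the tangent space: `T = I - N`. -/
def Tproj {m n : ℕ} (A : Matrix (Fin m) (Fin n) ℝ) : Matrix (Fin n) (Fin n) ℝ :=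
  1 - Nproj A

/-- Reflection: `R = I - 2N`. -/
def Rrefl {m n : ℕ} (A : Matrix (Fin m) (Fin n) ℝ) : Matrix (Fin n) (Fin n) ℝ :=
  1 - (2 : ℝ) • Nproj A

/-! ### Auxiliary matrix lemmas -/

section Mat
variable {m n : ℕ} (A : Matrix (Fin m) (Fin n) ℝ)

lemma aat_isUnit (h : A.rank = m) : IsUnit (A * Aᵀ).det := by
  have h1 : (A * Aᵀ).rank = m := by rw [Matrix.rank_self_mul_transpose, h]
  have h2 : LinearMap.range (A * Aᵀ).mulVecLin = ⊤ := by
    apply Submodule.eq_top_of_finrank_eq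
    rw [← Matrix.rank]
    simp [h1]
  have h3 : Function.Surjective ((A * Aᵀ).mulVec) := by
    intro y
    obtain ⟨z, hz⟩ := (LinearMap.range_eq_top.mp h2) y
    exact ⟨z, hz⟩
  exact Matrix.isUnit_iff_isUnit_det _ |>.mp (Matrix.mulVec_surjective_iff_isUnit.mp h3)

lemma A_mul_pinv (h : A.rank = m) : A * pinv A = 1 := by
  unfold pinv
  rw [← Matrix.mul_assoc, Matrix.mul_nonsing_inv _ (aat_isUnit A h)]

lemma A_mul_Nproj (h : A.rank = m) : A * Nproj A = A := by
  unfold Nproj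
  rw [← Matrix.mul_assoc, A_mul_pinv A h, Matrix.one_mul]

lemma A_mul_Rrefl (h : A.rank = m) : A * Rrefl A = -A := by
  unfold Rrefl
  rw [Matrix.mul_sub, Matrix.mul_one, Matrix.mul_smul, A_mul_Nproj A h]
  module

lemma Nproj_transpose (h : A.rank = m) : (Nproj A)ᵀ = Nproj A := by
  have hu := aat_isUnit A h
  unfold Nproj pinv
  rw [Matrix.transpose_mul, Matrix.transpose_mul, Matrix.transpose_transpose,
      Matrix.transpose_nonsing_inv, Matrix.transpose_mul, Matrix.transpose_transpose,
      Matrix.mul_assoc]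

lemma Nproj_idem (h : A.rank = m) : Nproj A * Nproj A = Nproj A := by
  nth_rewrite 1 [Nproj]
  rw [Matrix.mul_assoc, A_mul_Nproj A h]
  rfl

lemma Rrefl_orth (h : A.rank = m) : (Rrefl A)ᵀ * Rrefl A = 1 := by
  have hN := Nproj_transpose A h
  have hI := Nproj_idem A h
  unfold Rrefl
  rw [Matrix.transpose_sub, Matrix.transpose_one, Matrix.transpose_smul, hN]
  have : ((1 : Matrix (Fin n) (Fin n) ℝ) - (2:ℝ) • Nproj A) * (1 - (2:ℝ) • Nproj A)
      = 1 - (4:ℝ) • Nproj A + (4:ℝ) • (Nproj A * Nproj A) := by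
    simp only [Matrix.mul_sub, Matrix.sub_mul, Matrix.mul_one, Matrix.one_mul,
      Matrix.smul_mul, Matrix.mul_smul, smul_smul]
    module
  rw [this, hI]
  module

end Mat

/-! ### Auxiliary lemmas on `mvE` -/

section MvE
variable {m n : ℕ}

lemma mvE_mul (A : Matrix (Fin m) (Fin n) ℝ) (B : Matrix (Fin n) (Fin n) ℝ) (u : Evec n) :
    mvE (A * B) u = mvE A (mvE B u) := by
  simp [mvE, Matrix.toEuclideanLin_apply, Matrix.mulVec_mulVec]

lemma mvE_neg (A : Matrix (Fin m) (Fin n) ℝ) (u : Evec n) : mvE (-A) u = -(mvE A u) := by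
  simp [mvE]

lemma mvE_add_right (A : Matrix (Fin m) (Fin n) ℝ) (u w : Evec n) :
    mvE A (u + w) = mvE A u + mvE A w := by
  simp [mvE]

lemma inner_mvE (B : Matrix (Fin n) (Fin n) ℝ) (u w : Evec n) :
    inner (𝕜 := ℝ) (mvE B u) (mvE B w) = inner (𝕜 := ℝ) (mvE (Bᵀ * B) u) w := by
  simp only [mvE, Matrix.toEuclideanLin_apply, PiLp.inner_apply, RCLike.inner_apply,
    conj_trivial]
  have key : ∀ (a b : Fin n → ℝ), (B *ᵥ a) ⬝ᵥ (B *ᵥ b) = ((Bᵀ * B) *ᵥ a) ⬝ᵥ b := by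
    intro a b
    rw [← Matrix.mulVec_mulVec, Matrix.mulVec_transpose, ← Matrix.dotProduct_mulVec]
  have hk := key u.ofLp w.ofLp
  rw [dotProduct_comm (B *ᵥ u.ofLp), dotProduct_comm ((Bᵀ * B) *ᵥ u.ofLp)] at hk
  exact hk

lemma norm_mvE_orth (B : Matrix (Fin n) (Fin n) ℝ) (hB : Bᵀ * B = 1) (u : Evec n) :
    ‖mvE B u‖ = ‖u‖ := by
  have h1 : inner (𝕜 := ℝ) (mvE B u) (mvE B u) = inner (𝕜 := ℝ) u u := by
    rw [inner_mvE, hB]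
    have : mvE (1 : Matrix (Fin n) (Fin n) ℝ) u = u := by
      simp [mvE, Matrix.toEuclideanLin_apply]
    rw [this]
  have := real_inner_self_eq_norm_sq (mvE B u)
  have h2 := real_inner_self_eq_norm_sq u
  nlinarith [norm_nonneg (mvE B u), norm_nonneg u]

end MvE

/-! ### The bilinear map `x ↦ w ↦ ⟪x, w⟫ • ν` and the quadratic form of `f` -/

def Bmap {n m : ℕ} (ν : Evec m) : Evec n →L[ℝ] Evec n →L[ℝ] Evec m :=
  (((ContinuousLinearMap.smulRightL ℝ (Evec n) (Evec m)).comp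
    (innerSL ℝ (E := Evec n))).flip) ν

lemma Bmap_apply {n m : ℕ} (ν : Evec m) (x w : Evec n) :
    Bmap ν x w = (inner ℝ x w : ℝ) • ν := rfl

lemma quad_fderiv {m n : ℕ} (f : Evec n → Evec m) (hf : ContDiff ℝ (⊤ : ℕ∞) f) (ν : Evec m)
    (hν : ∀ (y w : Evec n), iteratedFDeriv ℝ 2 f y ![w, w] = ‖w‖ ^ 2 • ν) :
    ∀ a, fderiv ℝ f a = fderiv ℝ f 0 + Bmap ν a := by
  have hdiff : Differentiable ℝ f := hf.differentiable (by simp)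
  have hf1 : ContDiff ℝ (⊤ : ℕ∞) (fderiv ℝ f) := hf.fderiv_right (by exact_mod_cast le_top)
  have hdiff1 : Differentiable ℝ (fderiv ℝ f) := hf1.differentiable (by simp)
  have hd2 : ∀ (y u w : Evec n), fderiv ℝ (fderiv ℝ f) y u w = (inner ℝ u w : ℝ) • ν := by
    intro y u w
    have hsq : ∀ w : Evec n, fderiv ℝ (fderiv ℝ f) y w w = ‖w‖ ^ 2 • ν := by
      intro w
      have h := hν y w
      rw [iteratedFDeriv_two_apply] at h
      simpa using h
    have hsymm := second_derivative_symmetric (f := f) (f' := fderiv ℝ f)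
      (f'' := fderiv ℝ (fderiv ℝ f) y) (x := y)
      (fun z => (hdiff z).hasFDerivAt)
      ((hdiff1 y).hasFDerivAt) u w
    have hpol := hsq (u + w)
    rw [map_add] at hpol
    simp only [ContinuousLinearMap.add_apply, map_add] at hpol
    rw [hsq u, hsq w, ← hsymm] at hpol
    rw [norm_add_sq_real u w] at hpol
    have hr : (‖u‖ ^ 2 + 2 * (inner ℝ u w : ℝ) + ‖w‖ ^ 2) • ν
        = ‖u‖ ^ 2 • ν + ((inner ℝ u w : ℝ) • ν + (inner ℝ u w : ℝ) • ν) + ‖w‖ ^ 2 • ν := by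
      rw [add_smul, add_smul, two_mul, add_smul]
    rw [hr] at hpol
    have h2 : fderiv ℝ (fderiv ℝ f) y u w + fderiv ℝ (fderiv ℝ f) y u w
        = (inner ℝ u w : ℝ) • ν + (inner ℝ u w : ℝ) • ν := by
      rw [← sub_eq_zero]
      rw [← sub_eq_zero] at hpol
      rw [← hpol]
      abel
    have h2' : (2 : ℝ) • (fderiv ℝ (fderiv ℝ f) y u w) = (2 : ℝ) • ((inner ℝ u w : ℝ) • ν) := by
      rw [two_smul, two_smul]; exact h2
    exact smul_right_injective (Evec m) two_ne_zero h2'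
  have hfd : ∀ y : Evec n, fderiv ℝ (fderiv ℝ f) y = Bmap ν := by
    intro y
    refine ContinuousLinearMap.ext fun u => ContinuousLinearMap.ext fun w => ?_
    rw [hd2]; rfl
  have hG : Differentiable ℝ (fun a : Evec n => fderiv ℝ f a - Bmap ν a) :=
    hdiff1.sub (Bmap ν).differentiable
  have hG' : ∀ a : Evec n, fderiv ℝ (fun a : Evec n => fderiv ℝ f a - Bmap ν a) a = 0 := by
    intro a
    rw [fderiv_fun_sub (hdiff1 a) ((Bmap ν).differentiableAt), hfd, (Bmap ν).fderiv, sub_self]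
  intro a
  have := is_const_of_fderiv_eq_zero hG hG' a 0
  have h0 : (Bmap ν) (0 : Evec n) = 0 := map_zero _
  rw [h0, sub_zero] at this
  exact sub_eq_iff_eq_add.mp this

lemma quad_form {m n : ℕ} (f : Evec n → Evec m) (hf : ContDiff ℝ (⊤ : ℕ∞) f) (ν : Evec m)
    (hν : ∀ (y w : Evec n), iteratedFDeriv ℝ 2 f y ![w, w] = ‖w‖ ^ 2 • ν) :
    ∀ a, f a = f 0 + fderiv ℝ f 0 a + ((‖a‖ ^ 2) / 2) • ν := by
  have hdiff : Differentiable ℝ f := hf.differentiable (by simp)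
  have hL := quad_fderiv f hf ν hν
  have hq : ∀ a : Evec n, HasFDerivAt (fun a : Evec n => ((‖a‖ ^ 2) / 2) • ν) (Bmap ν a) a := by
    intro a
    have h1 : HasFDerivAt (fun a : Evec n => ‖a‖ ^ 2) (2 • (innerSL ℝ a)) a :=
      (hasStrictFDerivAt_norm_sq a).hasFDerivAt
    have h2 : HasFDerivAt (fun a : Evec n => (‖a‖ ^ 2) • ν)
        ((2 • (innerSL ℝ a)).smulRight ν) a := h1.smul_const ν
    have h3 : HasFDerivAt (fun a : Evec n => (2 : ℝ)⁻¹ • (‖a‖ ^ 2 • ν))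
        ((2 : ℝ)⁻¹ • (2 • (innerSL ℝ a)).smulRight ν) a :=
      h2.const_smul (𝕜 := ℝ) (R := ℝ) ((2 : ℝ)⁻¹)
    have hfun : (fun a : Evec n => ((‖a‖ ^ 2) / 2) • ν)
        = (fun a : Evec n => (2 : ℝ)⁻¹ • (‖a‖ ^ 2 • ν)) := by
      funext b
      rw [smul_smul]; ring_nf
    have hder : Bmap ν a = (2 : ℝ)⁻¹ • (2 • (innerSL ℝ a)).smulRight ν := by
      ext w i
      simp [Bmap_apply, ContinuousLinearMap.smul_apply, two_smul, smul_smul]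
      left; ring
    rw [hfun, hder]
    exact h3
  intro a
  have hg : ∀ b : Evec n, HasFDerivAt
      (fun b : Evec n => f b - fderiv ℝ f 0 b - ((‖b‖ ^ 2) / 2) • ν)
      (fderiv ℝ f b - fderiv ℝ f 0 - Bmap ν b) b :=
    fun b => ((hdiff b).hasFDerivAt.sub ((fderiv ℝ f 0).hasFDerivAt)).sub (hq b)
  have hgdiff : Differentiable ℝ
      (fun b : Evec n => f b - fderiv ℝ f 0 b - ((‖b‖ ^ 2) / 2) • ν) :=
    fun b => (hg b).differentiableAt
  have hg0 : ∀ b : Evec n, fderiv ℝ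
      (fun b : Evec n => f b - fderiv ℝ f 0 b - ((‖b‖ ^ 2) / 2) • ν) b = 0 := by
    intro b
    rw [(hg b).fderiv, hL b]
    abel
  have hc := is_const_of_fderiv_eq_zero hgdiff hg0 a 0
  simp only [norm_zero, map_zero] at hc
  have : f a - fderiv ℝ f 0 a - ((‖a‖ ^ 2) / 2) • ν = f 0 := by
    simpa using hc
  rw [← this]; abel

theorem hug_exact_level_preservation
    (m n : ℕ) (hm : 0 < m) (hmn : m < n)
    (f : Evec n → Evec m) (hf : ContDiff ℝ (⊤ : ℕ∞) f)
    (J : Evec n → Matrix (Fin m) (Fin n) ℝ)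
    (hJ : ∀ x, HasFDerivAt f
      (LinearMap.toContinuousLinearMap (Matrix.toEuclideanLin (J x))) x)
    (hrank : ∀ x, (J x).rank = m)
    (δ : ℝ) (hδ : 0 < δ)
    (x xh v : ℕ → Evec n)
    (hxh : ∀ k, xh k = x k + (δ / 2) • v k)
    (hv : ∀ k, v (k + 1) = mvE (Rrefl (J (xh k))) (v k))
    (hx : ∀ k, x (k + 1) = xh k + (δ / 2) • v (k + 1))
    (ν : Evec m)
    (hν : ∀ (y w : Evec n), iteratedFDeriv ℝ 2 f y ![w, w] = ‖w‖ ^ 2 • ν) :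
    ∀ k : ℕ, f (x k) = f (x 0) := by
  have hquad := quad_form f hf ν hν
  have hfderiv := quad_fderiv f hf ν hν
  have step : ∀ k : ℕ, f (x (k + 1)) = f (x k) := by
    intro k
    set s : ℝ := δ / 2 with hs
    set A : Matrix (Fin m) (Fin n) ℝ := J (xh k) with hA
    have hAr : A.rank = m := hrank _
    set h : Evec n := xh k with hh
    set v0 : Evec n := v k with hv0
    set v1 : Evec n := v (k + 1) with hv1
    have key1 : mvE A v1 + mvE A v0 = 0 := by
      rw [hv1, hv k, ← mvE_mul, A_mul_Rrefl A hAr, mvE_neg]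
      abel
    have key2 : ‖v1‖ = ‖v0‖ := by
      rw [hv1, hv k]
      exact norm_mvE_orth _ (Rrefl_orth A hAr) _
    have hx1 : x (k + 1) = h + s • v1 := hx k
    have hx0 : x k = h - s • v0 := by rw [hh, hxh k]; abel
    -- fderiv at h kills v1 + v0
    have hJh : fderiv ℝ f h = LinearMap.toContinuousLinearMap (Matrix.toEuclideanLin A) :=
      (hJ h).fderiv
    have happ : fderiv ℝ f h (v1 + v0) = 0 := by
      rw [hJh]
      show mvE A (v1 + v0) = 0
      rw [mvE_add_right, key1]
    have hLB : fderiv ℝ f 0 (v1 + v0) + (inner ℝ h (v1 + v0) : ℝ) • ν = 0 := by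
      rw [hfderiv h] at happ
      simpa [Bmap_apply] using happ
    -- norm expansions
    have hsm1 : ‖s • v1‖ ^ 2 = s ^ 2 * ‖v0‖ ^ 2 := by
      rw [norm_smul, key2, mul_pow, Real.norm_eq_abs, sq_abs]
    have hsm0 : ‖s • v0‖ ^ 2 = s ^ 2 * ‖v0‖ ^ 2 := by
      rw [norm_smul, mul_pow, Real.norm_eq_abs, sq_abs]
    have hn1 : ‖h + s • v1‖ ^ 2
        = ‖h‖ ^ 2 + 2 * (s * (inner ℝ h v1 : ℝ)) + s ^ 2 * ‖v0‖ ^ 2 := by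
      rw [norm_add_sq_real, real_inner_smul_right, hsm1]
    have hn0 : ‖h - s • v0‖ ^ 2
        = ‖h‖ ^ 2 - 2 * (s * (inner ℝ h v0 : ℝ)) + s ^ 2 * ‖v0‖ ^ 2 := by
      rw [norm_sub_sq_real, real_inner_smul_right, hsm0]
    have hdiffv : f (x (k + 1)) - f (x k)
        = s • (fderiv ℝ f 0 (v1 + v0) + (inner ℝ h (v1 + v0) : ℝ) • ν) := by
      rw [hquad (x (k + 1)), hquad (x k), hx1, hx0, hn1, hn0,
        map_add, map_sub, _root_.map_smul, _root_.map_smul, map_add, inner_add_right]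
      match_scalars <;> ring
    rw [hLB, smul_zero] at hdiffv
    exact sub_eq_zero.mp hdiffv
  intro k
  induction k with
  | zero => rfl
  | succ k ih => rw [step k, ih]
end
end

section
/- Along any solution (x(t), v(t)) of the Hug ODE, the quantity f(x(t)) is conserved: f(x(t)) = f(x(0)) for all t in the interval of existence, i.e. x(t) remains on the level manifold {y : f(y) = f(x(0))}. -/
open Matrix MeasureTheory

noncomputable section

/-- Golub–Pereyra term `N′_⊥(x)[w] = J(x)⁺ H(x)[w,·] T(x)` (as a matrix),
built from the Jacobian matrix `A = J(x)` and the matrix `Hw = H(x)[w,·]`. -/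
def Nperp' {m n : ℕ} (A Hw : Matrix (Fin m) (Fin n) ℝ) : Matrix (Fin n) (Fin n) ℝ :=
  pinv A * Hw * Tproj A

/-- Golub–Pereyra term `N′_∥(x)[w] = (N′_⊥(x)[w])ᵀ`. -/
def Npar' {m n : ℕ} (A Hw : Matrix (Fin m) (Fin n) ℝ) : Matrix (Fin n) (Fin n) ℝ :=
  (Nperp' A Hw)ᵀ

/-- The right-hand side of the velocity equation of the Hug ODE:
`(N′_∥(x)[(T(x)−N(x))v] − N′_⊥(x)[(T(x)−N(x))v]) v`. -/
def hugVField {m n : ℕ} (J : Evec n → Matrix (Fin m) (Fin n) ℝ)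
    (Hm : Evec n → Evec n → Matrix (Fin m) (Fin n) ℝ) (x v : Evec n) : Evec n :=
  mvE (Npar' (J x) (Hm x (mvE (Tproj (J x) - Nproj (J x)) v))
      - Nperp' (J x) (Hm x (mvE (Tproj (J x) - Nproj (J x)) v))) v

lemma isUnit_of_rank_eq_card {k : ℕ} (B : Matrix (Fin k) (Fin k) ℝ)
    (h : B.rank = k) : IsUnit B := by
  rw [← Matrix.mulVec_surjective_iff_isUnit]
  have hrange : LinearMap.range B.mulVecLin = ⊤ := by
    apply Submodule.eq_top_of_finrank_eq
    rw [← Matrix.rank, h]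
    simp
  intro y
  obtain ⟨z, hz⟩ := LinearMap.range_eq_top.mp hrange y
  exact ⟨z, hz⟩

lemma mul_Tproj_eq_zero {m n : ℕ} (A : Matrix (Fin m) (Fin n) ℝ)
    (h : A.rank = m) : A * Tproj A = 0 := by
  have hu : IsUnit (A * Aᵀ) := by
    apply isUnit_of_rank_eq_card
    rw [Matrix.rank_self_mul_transpose, h]
  have hinv : (A * Aᵀ) * (A * Aᵀ)⁻¹ = 1 :=
    Matrix.mul_nonsing_inv _ ((Matrix.isUnit_iff_isUnit_det _).mp hu)
  have : A * (pinv A * A) = A := by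
    rw [pinv, ← Matrix.mul_assoc, ← Matrix.mul_assoc, hinv, Matrix.one_mul]
  rw [Tproj, Nproj, Matrix.mul_sub, Matrix.mul_one, this, sub_self]

lemma mvE_mvE {k m n : ℕ} (A : Matrix (Fin m) (Fin n) ℝ)
    (B : Matrix (Fin n) (Fin k) ℝ) (v : Evec k) :
    mvE A (mvE B v) = mvE (A * B) v := by
  simp [mvE, Matrix.toEuclideanLin_apply, Matrix.mulVec_mulVec]

set_option maxHeartbeats 1000000 in
theorem hug_ode_stays_on_level_set
    (m n : ℕ) (hm : 0 < m) (hmn : m < n)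
    (f : Evec n → Evec m) (hf : ContDiff ℝ (⊤ : ℕ∞) f)
    (J : Evec n → Matrix (Fin m) (Fin n) ℝ)
    (hJ : ∀ x, HasFDerivAt f
      (LinearMap.toContinuousLinearMap (Matrix.toEuclideanLin (J x))) x)
    (hrank : ∀ x, (J x).rank = m)
    (Hm : Evec n → Evec n → Matrix (Fin m) (Fin n) ℝ)
    (hHm : ∀ (x w z : Evec n), mvE (Hm x w) z = iteratedFDeriv ℝ 2 f x ![w, z])
    (I : Set ℝ) (x v : ℝ → Evec n)
    (hx : ∀ t ∈ I, HasDerivAt x (mvE (Tproj (J (x t))) (v t)) t)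
    (hv : ∀ t ∈ I, HasDerivAt v (hugVField J Hm (x t) (v t)) t)
    (hI : Convex ℝ I) (h0 : (0 : ℝ) ∈ I) :
    ∀ t ∈ I, f (x t) = f (x 0) := by
  have hderiv : ∀ t ∈ I, HasDerivAt (fun s => f (x s)) 0 t := by
    intro t ht
    have h1 := (hJ (x t)).comp_hasDerivAt t (hx t ht)
    have h2 : (LinearMap.toContinuousLinearMap (Matrix.toEuclideanLin (J (x t))))
        (mvE (Tproj (J (x t))) (v t)) = 0 := by
      show mvE (J (x t)) (mvE (Tproj (J (x t))) (v t)) = 0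
      rw [mvE_mvE, mul_Tproj_eq_zero _ (hrank (x t))]
      simp [mvE]
    rwa [h2] at h1
  have hzero : ((1 : ℝ →L[ℝ] ℝ).smulRight (0 : Evec m)) = (0 : ℝ →L[ℝ] Evec m) := by
    ext; simp
  have hF : ∀ s ∈ I, HasFDerivWithinAt (fun u => f (x u)) (0 : ℝ →L[ℝ] Evec m) I s := by
    intro s hs
    have h := (hderiv s hs).hasFDerivAt
    rw [ContinuousLinearMap.toSpanSingleton_zero] at h
    exact h.hasFDerivWithinAt
  intro t ht
  have key : ‖(fun u => f (x u)) t - (fun u => f (x u)) 0‖ ≤ 0 * ‖t - 0‖ :=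
    hI.norm_image_sub_le_of_norm_hasFDerivWithin_le hF
      (fun s _ => norm_zero.le) h0 ht
  rw [zero_mul] at key
  exact sub_eq_zero.mp (norm_le_zero_iff.mp key)
end
end
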